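/- Let P₁, P₂ be complex polynomials of degree at most m with coefficients a₀,…,a_m and b₀,…,b_m. Then there exist c₀,…,c_m ∈ ℂ such that for every n = 0,…,2m, Σ_{k} (a_k·conj(a_{n-k}) + b_k·conj(b_{n-k})) = Σ_k c_k·conj(c_{n-k}); equivalently, P₁(z)conj(P₁(z̄)) + P₂(z)conj(P₂(z̄)) = M(z)·conj(M(z̄)) where M(z) = Σ_{n=0}^m zⁿ cₙ. -/

import Mathlib

open Polynomial

noncomputable section

lemma pconj_eval (p : ℂ[X]) (z : ℂ) :
    (p.map (starRingEnd ℂ)).eval z = (starRingEnd ℂ) (p.eval ((starRingEnd ℂ) z)) := by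
  induction p using Polynomial.induction_on with
  | C c => simp
  | add p q hp hq => simp [hp, hq]
  | monomial n c h =>
    simp only [Polynomial.map_mul, Polynomial.map_pow, map_C, map_X, eval_mul, eval_pow,
      eval_C, eval_X, map_mul, map_pow, Complex.conj_conj]

lemma eval_real_map (q : Polynomial ℝ) (x : ℝ) :
    (q.map (algebraMap ℝ ℂ)).eval (x : ℂ) = ((q.eval x : ℝ) : ℂ) := by
  induction q using Polynomial.induction_on with
  | C c => simp
  | add p q hp hq => simp [hp, hq]
  | monomial n c h =>
    simp only [Polynomial.map_mul, Polynomial.map_pow, map_C, map_X, eval_mul, eval_pow,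
      eval_C, eval_X]
    rw [Complex.coe_algebraMap]
    push_cast
    ring

end

lemma real_map_self_conj (q : Polynomial ℝ) :
    (q.map (algebraMap ℝ ℂ)).map (starRingEnd ℂ) = q.map (algebraMap ℝ ℂ) := by
  rw [Polynomial.map_map]
  congr 1
  ext x
  simp [Complex.conj_ofReal]

lemma real_map_conj_eval (q : Polynomial ℝ) (z : ℂ) :
    (q.map (algebraMap ℝ ℂ)).eval ((starRingEnd ℂ) z) =
      (starRingEnd ℂ) ((q.map (algebraMap ℝ ℂ)).eval z) := by
  have h := pconj_eval (q.map (algebraMap ℝ ℂ)) z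
  rw [real_map_self_conj] at h
  rw [h]
  simp

lemma fejer_riesz : ∀ N : ℕ, ∀ q : Polynomial ℝ, q.natDegree ≤ N →
    (∀ x : ℝ, 0 ≤ q.eval x) →
    ∃ M : ℂ[X], q.map (algebraMap ℝ ℂ) = M * M.map (starRingEnd ℂ) := by
  intro N
  induction N using Nat.strong_induction_on with
  | _ N IH =>
    intro q hdeg hpos
    by_cases hq0 : q = 0
    · exact ⟨0, by simp [hq0]⟩
    by_cases hd0 : q.natDegree = 0
    · -- constant case
      obtain ⟨r, rfl⟩ := Polynomial.natDegree_eq_zero.mp hd0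
      have hr : 0 ≤ r := by simpa using hpos 0
      refine ⟨Polynomial.C (Real.sqrt r : ℂ), ?_⟩
      rw [map_C, map_C, ← C_mul]
      congr 1
      rw [Complex.coe_algebraMap]
      have : (starRingEnd ℂ) ((Real.sqrt r : ℝ) : ℂ) = ((Real.sqrt r : ℝ) : ℂ) :=
        Complex.conj_ofReal _
      rw [this]
      rw [← Complex.ofReal_mul, Real.mul_self_sqrt hr]
    · -- nonconstant case
      set p : ℂ[X] := q.map (algebraMap ℝ ℂ) with hp
      have hpne : p ≠ 0 := by
        simpa [hp] using (Polynomial.map_ne_zero_iff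
          (algebraMap ℝ ℂ).injective ).mpr hq0
      have hpdeg : p.natDegree = q.natDegree := by
        simp [hp, Polynomial.natDegree_map_eq_of_injective (algebraMap ℝ ℂ).injective]
      have hdne : p.degree ≠ 0 := by
        rw [Polynomial.degree_eq_natDegree hpne]
        simp [hpdeg]
        omega
      obtain ⟨α, hα⟩ := IsAlgClosed.exists_root p hdne
      by_cases him : α.im = 0
      · -- real root
        set r : ℝ := α.re with hr
        have hαr : α = (r : ℂ) := Complex.ext rfl him
        have hroot : q.eval r = 0 := by
          have h1 : p.eval (r : ℂ) = ((q.eval r : ℝ) : ℂ) := eval_real_map q r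
          have h2 : p.eval (r : ℂ) = 0 := by rw [← hαr]; exact hα
          rw [h1] at h2
          exact_mod_cast h2
        have hderiv : q.derivative.eval r = 0 := by
          have hmin : IsLocalMin (fun x => q.eval x) r :=
            Filter.Eventually.of_forall (fun x => by
              simpa [hroot] using hpos x)
          have h := hmin.deriv_eq_zero
          rwa [Polynomial.deriv] at h
        obtain ⟨q₂, hq₂⟩ := (Polynomial.dvd_iff_isRoot.mpr hroot :
          (X - C r) ∣ q)
        have hq₂root : q₂.eval r = 0 := by
          have hd : q.derivative = q₂ + (X - C r) * q₂.derivative := by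
            rw [hq₂, derivative_mul, derivative_sub, derivative_X, derivative_C]
            ring
          have := hderiv
          rw [hd] at this
          simpa using this
        obtain ⟨q₁, hq₁⟩ := (Polynomial.dvd_iff_isRoot.mpr hq₂root :
          (X - C r) ∣ q₂)
        have hqfac : q = (X - C r) ^ 2 * q₁ := by
          rw [hq₂, hq₁]; ring
        have hq₁ne : q₁ ≠ 0 := by
          intro h0
          exact hq0 (by rw [hqfac, h0, mul_zero])
        have hXrne : ((X : Polynomial ℝ) - C r) ^ 2 ≠ 0 :=
          pow_ne_zero 2 (Polynomial.X_sub_C_ne_zero r)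
        have hndeg : q.natDegree = 2 + q₁.natDegree := by
          rw [hqfac, Polynomial.natDegree_mul hXrne hq₁ne,
            Polynomial.natDegree_pow, Polynomial.natDegree_X_sub_C]
        have hq₁pos : ∀ x : ℝ, 0 ≤ q₁.eval x := by
          have hne : ∀ x : ℝ, x ≠ r → 0 ≤ q₁.eval x := by
            intro x hx
            have h := hpos x
            rw [hqfac] at h
            simp only [eval_mul, eval_pow, eval_sub, eval_X, eval_C] at h
            have hxs : x - r ≠ 0 := sub_ne_zero.mpr hx
            have hxr : 0 < (x - r) ^ 2 := by positivity
            nlinarith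
          intro x
          by_cases hx : x = r
          · rw [hx]
            have htend : Filter.Tendsto (fun y => q₁.eval y)
                (nhdsWithin r ({r}ᶜ : Set ℝ)) (nhds (q₁.eval r)) :=
              (q₁.continuousAt).continuousWithinAt
            refine ge_of_tendsto htend ?_
            exact eventually_mem_nhdsWithin.mono (fun y hy => hne y hy)
          · exact hne x hx
        have hlt : q₁.natDegree < N := by omega
        obtain ⟨M₁, hM₁⟩ := IH q₁.natDegree hlt q₁ le_rfl hq₁pos
        refine ⟨(X - C (r : ℂ)) * M₁, ?_⟩
        have hmapfac : q.map (algebraMap ℝ ℂ) =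
            (X - C (r : ℂ)) ^ 2 * (q₁.map (algebraMap ℝ ℂ)) := by
          rw [hqfac]
          simp [Polynomial.map_mul, Polynomial.map_pow, Polynomial.map_sub]
        have hconjfac : ((X - C (r : ℂ)) * M₁).map (starRingEnd ℂ) =
            (X - C (r : ℂ)) * M₁.map (starRingEnd ℂ) := by
          simp [Polynomial.map_mul, Polynomial.map_sub, Complex.conj_ofReal]
        rw [hp, hmapfac, hconjfac, hM₁]
        ring
      · -- complex root
        set s : Polynomial ℝ :=
          X ^ 2 - C (2 * α.re) * X + C (Complex.normSq α) with hs
        have hsmap : s.map (algebraMap ℝ ℂ) =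
            (X - C α) * (X - C ((starRingEnd ℂ) α)) := by
          rw [hs]
          simp only [Polynomial.map_add, Polynomial.map_sub, Polynomial.map_mul,
            Polynomial.map_pow, Polynomial.map_X, Polynomial.map_C]
          have h1 : (algebraMap ℝ ℂ) (2 * α.re) = α + (starRingEnd ℂ) α := by
            rw [Complex.coe_algebraMap]
            push_cast
            rw [Complex.add_conj]
            push_cast
            ring
          have h2 : (algebraMap ℝ ℂ) (Complex.normSq α) = α * (starRingEnd ℂ) α := by
            rw [Complex.coe_algebraMap, Complex.mul_conj]
          rw [h1, h2, C_add, C_mul]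
          ring
        have hsmonic : s.Monic := by
          rw [hs]
          monicity!
        have hconjroot : p.eval ((starRingEnd ℂ) α) = 0 := by
          rw [hp, real_map_conj_eval]
          rw [hp] at hα
          rw [hα]
          simp
        have hαne : α ≠ (starRingEnd ℂ) α := by
          intro h
          apply him
          have := congrArg Complex.im h
          simp at this
          linarith
        have hdvd : s.map (algebraMap ℝ ℂ) ∣ p := by
          obtain ⟨t, ht⟩ := Polynomial.dvd_iff_isRoot.mpr hα
          have htroot : t.eval ((starRingEnd ℂ) α) = 0 := by
            have := hconjroot
            rw [ht] at this
            simp only [eval_mul, eval_sub, eval_X, eval_C] at this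
            have hne : (starRingEnd ℂ) α - α ≠ 0 := sub_ne_zero.mpr (Ne.symm hαne)
            exact (mul_eq_zero.mp this).resolve_left hne
          obtain ⟨t₁, ht₁⟩ := Polynomial.dvd_iff_isRoot.mpr htroot
          refine ⟨t₁, ?_⟩
          rw [hsmap, ht, ht₁]
          ring
        have hsdvd : s ∣ q := by
          rw [← Polynomial.map_dvd_map (algebraMap ℝ ℂ) (algebraMap ℝ ℂ).injective hsmonic]
          exact hdvd
        obtain ⟨q₁, hq₁⟩ := hsdvd
        have hspos : ∀ x : ℝ, 0 < s.eval x := by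
          intro x
          rw [hs]
          simp only [eval_add, eval_sub, eval_mul, eval_pow, eval_X, eval_C]
          have h1 : Complex.normSq α = α.re ^ 2 + α.im ^ 2 := by
            rw [Complex.normSq_apply]; ring
          have h2 : α.im ^ 2 > 0 := by positivity
          nlinarith [sq_nonneg (x - α.re)]
        have hq₁pos : ∀ x : ℝ, 0 ≤ q₁.eval x := by
          intro x
          have h := hpos x
          rw [hq₁, eval_mul] at h
          have hsx := hspos x
          by_contra h'
          push_neg at h'
          nlinarith
        have hsne : s ≠ 0 := hsmonic.ne_zero
        have hq₁ne : q₁ ≠ 0 := by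
          intro h0
          exact hq0 (by rw [hq₁, h0, mul_zero])
        have hsdeg : s.natDegree = 2 := by
          rw [hs]
          compute_degree!
        have hndeg : q.natDegree = 2 + q₁.natDegree := by
          rw [hq₁, Polynomial.natDegree_mul hsne hq₁ne, hsdeg]
        have hlt : q₁.natDegree < N := by omega
        obtain ⟨M₁, hM₁⟩ := IH q₁.natDegree hlt q₁ le_rfl hq₁pos
        refine ⟨(X - C α) * M₁, ?_⟩
        have hconjfac : ((X - C α) * M₁).map (starRingEnd ℂ) =
            (X - C ((starRingEnd ℂ) α)) * M₁.map (starRingEnd ℂ) := by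
          simp [Polynomial.map_mul, Polynomial.map_sub]
        rw [hp, hq₁, Polynomial.map_mul, hsmap, hM₁, hconjfac]
        ring

lemma pconj_pconj (P : ℂ[X]) : (P.map (starRingEnd ℂ)).map (starRingEnd ℂ) = P := by
  rw [Polynomial.map_map]
  have : (starRingEnd ℂ).comp (starRingEnd ℂ) = RingHom.id ℂ :=
    RingHom.ext fun x => Complex.conj_conj x
  rw [this, Polynomial.map_id]

theorem gauss_lucas_stmt17 (m : ℕ) (a b : ℕ → ℂ)
    (ha : ∀ n, m < n → a n = 0) (hb : ∀ n, m < n → b n = 0) :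
    ∃ c : ℕ → ℂ, (∀ n, m < n → c n = 0) ∧
      (∀ n, ∑ k ∈ Finset.range (n + 1),
          (a k * (starRingEnd ℂ) (a (n - k)) + b k * (starRingEnd ℂ) (b (n - k))) =
        ∑ k ∈ Finset.range (n + 1), c k * (starRingEnd ℂ) (c (n - k))) ∧
      (∀ z : ℂ,
        (∑ n ∈ Finset.range (m + 1), z ^ n * a n) *
            (starRingEnd ℂ) (∑ n ∈ Finset.range (m + 1), ((starRingEnd ℂ) z) ^ n * a n) +
          (∑ n ∈ Finset.range (m + 1), z ^ n * b n) *
            (starRingEnd ℂ) (∑ n ∈ Finset.range (m + 1), ((starRingEnd ℂ) z) ^ n * b n) =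
        (∑ n ∈ Finset.range (m + 1), z ^ n * c n) *
          (starRingEnd ℂ) (∑ n ∈ Finset.range (m + 1), ((starRingEnd ℂ) z) ^ n * c n)) := by
  classical
  set A : ℂ[X] := ∑ n ∈ Finset.range (m + 1), Polynomial.monomial n (a n) with hA
  set B : ℂ[X] := ∑ n ∈ Finset.range (m + 1), Polynomial.monomial n (b n) with hB
  have coeff_sum_mono : ∀ (f : ℕ → ℂ), (∀ n, m < n → f n = 0) → ∀ k,
      (∑ n ∈ Finset.range (m + 1), Polynomial.monomial n (f n)).coeff k = f k := by
    intro f hf k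
    rw [Polynomial.finset_sum_coeff]
    by_cases hk : k ∈ Finset.range (m + 1)
    · rw [Finset.sum_eq_single k]
      · simp
      · intro i _ hik; simp [Polynomial.coeff_monomial, hik]
      · intro h; exact absurd hk h
    · rw [Finset.sum_eq_zero, hf k (by simpa using hk)]
      intro i hi
      rw [Polynomial.coeff_monomial, if_neg]
      intro h
      rw [h] at hi
      exact hk hi
  have coeffA : ∀ k, A.coeff k = a k := coeff_sum_mono a ha
  have coeffB : ∀ k, B.coeff k = b k := coeff_sum_mono b hb
  have degA : A.natDegree ≤ m := Polynomial.natDegree_le_iff_coeff_eq_zero.mpr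
    (fun k hk => (coeffA k).trans (ha k hk))
  have degB : B.natDegree ≤ m := Polynomial.natDegree_le_iff_coeff_eq_zero.mpr
    (fun k hk => (coeffB k).trans (hb k hk))
  have evalA : ∀ (f : ℕ → ℂ) (z : ℂ),
      (∑ n ∈ Finset.range (m + 1), Polynomial.monomial n (f n)).eval z =
        ∑ n ∈ Finset.range (m + 1), z ^ n * f n := by
    intro f z
    rw [Polynomial.eval_finset_sum]
    exact Finset.sum_congr rfl fun n _ => by rw [Polynomial.eval_monomial]; ring
  set p : ℂ[X] := A * A.map (starRingEnd ℂ) + B * B.map (starRingEnd ℂ) with hpdef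
  have hpconj : p.map (starRingEnd ℂ) = p := by
    rw [hpdef]
    simp only [Polynomial.map_add, Polynomial.map_mul, pconj_pconj]
    ring
  -- lift p to a real polynomial
  obtain ⟨q, hq⟩ : ∃ q : Polynomial ℝ, q.map (algebraMap ℝ ℂ) = p := by
    rw [← Polynomial.mem_lifts]
    rw [Polynomial.lifts_iff_coeff_lifts]
    intro n
    have : (starRingEnd ℂ) (p.coeff n) = p.coeff n := by
      conv_rhs => rw [← hpconj]
      rw [Polynomial.coeff_map]
    refine ⟨(p.coeff n).re, ?_⟩
    rw [Complex.coe_algebraMap]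
    exact Complex.conj_eq_iff_re.mp this
  have hqpos : ∀ x : ℝ, 0 ≤ q.eval x := by
    intro x
    have h1 : ((q.eval x : ℝ) : ℂ) = p.eval (x : ℂ) := by
      rw [← eval_real_map, hq]
    have h2 : p.eval (x : ℂ) =
        A.eval (x : ℂ) * (starRingEnd ℂ) (A.eval (x : ℂ)) +
          B.eval (x : ℂ) * (starRingEnd ℂ) (B.eval (x : ℂ)) := by
      rw [hpdef]
      simp only [Polynomial.eval_add, Polynomial.eval_mul]
      rw [pconj_eval, pconj_eval, Complex.conj_ofReal]
    rw [h2] at h1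
    rw [Complex.mul_conj, Complex.mul_conj] at h1
    have : q.eval x = Complex.normSq (A.eval x) + Complex.normSq (B.eval x) := by
      exact_mod_cast h1
    rw [this]
    exact add_nonneg (Complex.normSq_nonneg _) (Complex.normSq_nonneg _)
  obtain ⟨M, hM⟩ := fejer_riesz q.natDegree q le_rfl hqpos
  have hpM : p = M * M.map (starRingEnd ℂ) := by rw [← hq, hM]
  -- degree bound on M
  have hMdeg : M.natDegree ≤ m := by
    by_cases hM0 : M = 0
    · simp [hM0]
    have hpdeg : p.natDegree ≤ 2 * m := by
      rw [hpdef]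
      refine le_trans (Polynomial.natDegree_add_le _ _) ?_
      have h1 : (A * A.map (starRingEnd ℂ)).natDegree ≤ 2 * m := by
        refine le_trans (Polynomial.natDegree_mul_le) ?_
        have := Polynomial.natDegree_map_le (f := starRingEnd ℂ) (p := A)
        omega
      have h2 : (B * B.map (starRingEnd ℂ)).natDegree ≤ 2 * m := by
        refine le_trans (Polynomial.natDegree_mul_le) ?_
        have := Polynomial.natDegree_map_le (f := starRingEnd ℂ) (p := B)
        omega
      omega
    have hconjne : M.map (starRingEnd ℂ) ≠ 0 := by
      intro h
      apply hM0
      have := congrArg (Polynomial.map (starRingEnd ℂ)) h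
      rwa [pconj_pconj, Polynomial.map_zero] at this
    have hconjdeg : (M.map (starRingEnd ℂ)).natDegree = M.natDegree :=
      Polynomial.natDegree_map_eq_of_injective (starRingEnd ℂ).injective M
    have : p.natDegree = M.natDegree + M.natDegree := by
      rw [hpM, Polynomial.natDegree_mul hM0 hconjne, hconjdeg]
    omega
  refine ⟨fun n => M.coeff n, ?_, ?_, ?_⟩
  · intro n hn
    exact Polynomial.coeff_eq_zero_of_natDegree_lt (lt_of_le_of_lt hMdeg hn)
  · intro n
    have hL : p.coeff n = ∑ k ∈ Finset.range (n + 1),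
        (a k * (starRingEnd ℂ) (a (n - k)) + b k * (starRingEnd ℂ) (b (n - k))) := by
      rw [hpdef, Polynomial.coeff_add, Polynomial.coeff_mul, Polynomial.coeff_mul,
        Finset.Nat.sum_antidiagonal_eq_sum_range_succ_mk,
        Finset.Nat.sum_antidiagonal_eq_sum_range_succ_mk, ← Finset.sum_add_distrib]
      refine Finset.sum_congr rfl fun k _ => ?_
      rw [Polynomial.coeff_map, Polynomial.coeff_map, coeffA, coeffB, coeffA, coeffB]
    have hR : p.coeff n = ∑ k ∈ Finset.range (n + 1),
        M.coeff k * (starRingEnd ℂ) (M.coeff (n - k)) := by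
      rw [hpM, Polynomial.coeff_mul, Finset.Nat.sum_antidiagonal_eq_sum_range_succ_mk]
      exact Finset.sum_congr rfl fun k _ => by rw [Polynomial.coeff_map]
    rw [← hL, hR]
  · intro z
    have hMeval : ∀ w : ℂ, M.eval w = ∑ n ∈ Finset.range (m + 1), w ^ n * M.coeff n := by
      intro w
      rw [Polynomial.eval_eq_sum_range' (lt_of_le_of_lt hMdeg (Nat.lt_succ_self m))]
      exact Finset.sum_congr rfl fun n _ => mul_comm _ _
    have hpe : p.eval z =
        (∑ n ∈ Finset.range (m + 1), z ^ n * a n) *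
            (starRingEnd ℂ) (∑ n ∈ Finset.range (m + 1), ((starRingEnd ℂ) z) ^ n * a n) +
          (∑ n ∈ Finset.range (m + 1), z ^ n * b n) *
            (starRingEnd ℂ) (∑ n ∈ Finset.range (m + 1), ((starRingEnd ℂ) z) ^ n * b n) := by
      rw [hpdef]
      simp only [Polynomial.eval_add, Polynomial.eval_mul]
      rw [pconj_eval, pconj_eval, hA, hB, evalA, evalA, evalA, evalA]
    have hMe : p.eval z = (∑ n ∈ Finset.range (m + 1), z ^ n * M.coeff n) *
        (starRingEnd ℂ) (∑ n ∈ Finset.range (m + 1), ((starRingEnd ℂ) z) ^ n * M.coeff n) := by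
      rw [hpM, Polynomial.eval_mul, pconj_eval, hMeval, hMeval]
    rw [← hpe, hMe]
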